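/- For every positive integer N there exists a graph G with dtr(G) − Det(G) ≥ N. Concretely, for k ≥ max{3, (N+3)/2}, the bipartite graph G on U ∪ W, where U = {u_1,...,u_{2^k−2}} with u_j labeled by the binary representation of j, W = {w_1,...,w_{k−1}}, and w_i adjacent to u_j iff the binary digit sum of j equals i, satisfies Det(G) = 2^k − (k+1) and dtr(G) = 2^k + k − 4, so dtr(G) − Det(G) = 2k − 3 ≥ N. -/

import Mathlib

open scoped Classical

/-- `E` is a determining set: any automorphism fixing `E` pointwise is the identity. -/
def isDeterminingSet {V : Type*} (G : SimpleGraph V) (E : Set V) : Prop :=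
  ∀ g : G ≃g G, (∀ v ∈ E, g v = v) → ∀ v : V, g v = v

/-- The graph of the construction: vertices `u_j` (`j = 1, …, 2^k - 2`, encoded as
`Fin (2^k - 2)` via `j = j' + 1`) and `w_i` (`i = 1, …, k-1`, encoded as `Fin (k-1)` via
`i = i' + 1`), with `w_i` adjacent to `u_j` iff the binary digit sum of `j` equals `i`. -/
def constructionGraph (k : ℕ) : SimpleGraph (Fin (2 ^ k - 2) ⊕ Fin (k - 1)) :=
  SimpleGraph.fromRel (fun a b =>
    match a, b with
    | Sum.inl j, Sum.inr i => (Nat.digits 2 (j.val + 1)).sum = i.val + 1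
    | _, _ => False)

namespace Stmt19Aux

/-- binary digit sum -/
def ds (n : ℕ) : ℕ := (Nat.digits 2 n).sum

lemma ds_pos {n : ℕ} (hn : n ≠ 0) : 0 < ds n := by
  have hne : Nat.digits 2 n ≠ [] := Nat.digits_ne_nil_iff_ne_zero.mpr hn
  have h1 : (Nat.digits 2 n).getLast hne ≠ 0 := Nat.getLast_digit_ne_zero 2 hn
  have h2 : (Nat.digits 2 n).getLast hne ≤ ds n :=
    List.single_le_sum (fun x _ => Nat.zero_le x) _ (List.getLast_mem hne)
  omega

lemma ds_le_len (n : ℕ) : ds n ≤ (Nat.digits 2 n).length := by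
  have := List.sum_le_card_nsmul (Nat.digits 2 n) 1
    (fun x hx => Nat.lt_succ_iff.mp (Nat.digits_lt_base (by norm_num) hx))
  simpa [ds] using this

lemma all_ones {l : List ℕ} (h1 : ∀ x ∈ l, x ≤ 1) (h2 : l.length ≤ l.sum) :
    l = List.replicate l.length 1 := by
  induction l with
  | nil => simp
  | cons a t ih =>
    simp only [List.length_cons, List.sum_cons] at h2 ⊢
    have ha : a ≤ 1 := h1 a (by simp)
    have ht : t.sum ≤ t.length := by
      have := List.sum_le_card_nsmul t 1 (fun x hx => h1 x (by simp [hx]))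
      simpa using this
    have ha1 : a = 1 := by omega
    have := ih (fun x hx => h1 x (by simp [hx])) (by omega)
    rw [List.replicate_succ, ha1, ← this]

lemma ofDigits_replicate (m : ℕ) : Nat.ofDigits 2 (List.replicate m 1) = 2 ^ m - 1 := by
  induction m with
  | zero => simp
  | succ m ih =>
    have h1 : 1 ≤ 2 ^ m := Nat.one_le_two_pow
    rw [List.replicate_succ, Nat.ofDigits_cons, ih]
    push_cast
    rw [pow_succ]
    omega

lemma ds_lt {n k : ℕ} (h1 : n < 2 ^ k - 1) : ds n < k := by
  rcases eq_or_ne n 0 with rfl | hn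
  · have : 0 < 2 ^ k - 1 := h1
    have : 1 ≤ k := by
      by_contra h
      interval_cases k <;> simp_all
    simp [ds]; omega
  have hlen : (Nat.digits 2 n).length ≤ k := by
    rw [Nat.digits_len 2 n (by norm_num) hn]
    have : Nat.log 2 n < k := Nat.log_lt_of_lt_pow hn (by omega)
    omega
  by_contra hge
  push_neg at hge
  have hle := ds_le_len n
  have hdk : ds n = k := by omega
  have hlk : (Nat.digits 2 n).length = k := by omega
  have hrep : Nat.digits 2 n = List.replicate k 1 := by
    have := all_ones (l := Nat.digits 2 n)
      (fun x hx => Nat.lt_succ_iff.mp (Nat.digits_lt_base (by norm_num) hx))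
      (by rw [hlk]; rw [← hdk]; exact le_of_eq rfl)
    rwa [hlk] at this
  have : n = 2 ^ k - 1 := by
    have := Nat.ofDigits_digits 2 n
    rw [hrep, ofDigits_replicate] at this
    omega
  omega

lemma ds_two_pow_sub_one (i : ℕ) : ds (2 ^ i - 1) = i := by
  induction i with
  | zero => simp [ds]
  | succ i ih =>
    have h1 : 1 ≤ 2 ^ i := Nat.one_le_two_pow
    have heq : 2 ^ (i + 1) - 1 = 2 * (2 ^ i - 1) + 1 := by rw [pow_succ]; omega
    rw [ds, heq, Nat.digits_def' (b := 2) (by norm_num) (by omega)]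
    have hm : (2 * (2 ^ i - 1) + 1) % 2 = 1 := by omega
    have hd : (2 * (2 ^ i - 1) + 1) / 2 = 2 ^ i - 1 := by omega
    rw [hm, hd, List.sum_cons, ← ds, ih]; omega

lemma ds_double {n : ℕ} (hn : n ≠ 0) : ds (2 * n) = ds n := by
  rw [ds, Nat.digits_def' (b := 2) (by norm_num) (by omega)]
  have hm : (2 * n) % 2 = 0 := by omega
  have hd : (2 * n) / 2 = n := by omega
  rw [hm, hd, List.sum_cons, ← ds]
  omega


section Graph

variable {k : ℕ} (hk : 3 ≤ k)

abbrev V (k : ℕ) := Fin (2 ^ k - 2) ⊕ Fin (k - 1)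

include hk in
lemma pow8 : 8 ≤ 2 ^ k := by
  calc (8 : ℕ) = 2 ^ 3 := by norm_num
  _ ≤ 2 ^ k := Nat.pow_le_pow_right (by norm_num) hk

lemma adj_inl_inr {j : Fin (2 ^ k - 2)} {i : Fin (k - 1)} :
    (constructionGraph k).Adj (Sum.inl j) (Sum.inr i) ↔ ds (j.val + 1) = i.val + 1 := by
  simp [constructionGraph, SimpleGraph.fromRel_adj, ds]

lemma not_adj_inl_inl {j j' : Fin (2 ^ k - 2)} :
    ¬ (constructionGraph k).Adj (Sum.inl j) (Sum.inl j') := by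
  simp [constructionGraph, SimpleGraph.fromRel_adj]

lemma not_adj_inr_inr {i i' : Fin (k - 1)} :
    ¬ (constructionGraph k).Adj (Sum.inr i) (Sum.inr i') := by
  simp [constructionGraph, SimpleGraph.fromRel_adj]

include hk in
lemma ds_bounds (j : Fin (2 ^ k - 2)) : 1 ≤ ds (j.val + 1) ∧ ds (j.val + 1) < k := by
  have h8 := pow8 hk
  have hj := j.isLt
  constructor
  · exact ds_pos (by omega)
  · exact ds_lt (by omega)

def sig (j : Fin (2 ^ k - 2)) : Fin (k - 1) :=
  ⟨ds (j.val + 1) - 1, by have := ds_bounds hk j; omega⟩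

include hk in
lemma adj_inl_inr' {j : Fin (2 ^ k - 2)} {i : Fin (k - 1)} :
    (constructionGraph k).Adj (Sum.inl j) (Sum.inr i) ↔ i = sig hk j := by
  rw [adj_inl_inr, Fin.ext_iff]
  have := ds_bounds hk j
  simp only [sig]
  omega

include hk in
lemma adj_inr_inl' {j : Fin (2 ^ k - 2)} {i : Fin (k - 1)} :
    (constructionGraph k).Adj (Sum.inr i) (Sum.inl j) ↔ i = sig hk j := by
  rw [SimpleGraph.adj_comm]; exact adj_inl_inr' hk

include hk in
lemma exists_pair (i : Fin (k - 1)) :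
    ∃ j1 j2 : Fin (2 ^ k - 2), j1 ≠ j2 ∧ sig hk j1 = i ∧ sig hk j2 = i := by
  have h8 := pow8 hk
  have hi : i.val + 1 < k := by have := i.isLt; omega
  have hp1 : 2 ^ (i.val + 1) < 2 ^ k := Nat.pow_lt_pow_right (by norm_num) hi
  have hp2 : 2 ^ (i.val + 2) ≤ 2 ^ k := Nat.pow_le_pow_right (by norm_num) (by omega)
  have hq1 : 2 ≤ 2 ^ (i.val + 1) := by
    calc (2:ℕ) = 2 ^ 1 := by norm_num
    _ ≤ 2 ^ (i.val + 1) := Nat.pow_le_pow_right (by norm_num) (by omega)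
  have hq2 : 2 ^ (i.val + 2) = 2 * 2 ^ (i.val + 1) := by rw [pow_succ]; ring
  refine ⟨⟨2 ^ (i.val + 1) - 2, by omega⟩, ⟨2 ^ (i.val + 2) - 3, by omega⟩, ?_, ?_, ?_⟩
  · intro h
    rw [Fin.ext_iff] at h
    simp only at h
    omega
  · rw [Fin.ext_iff]
    simp only [sig]
    have : (2 ^ (i.val + 1) - 2) + 1 = 2 ^ (i.val + 1) - 1 := by omega
    rw [this, ds_two_pow_sub_one]
    omega
  · rw [Fin.ext_iff]
    simp only [sig]
    have : (2 ^ (i.val + 2) - 3) + 1 = 2 * (2 ^ (i.val + 1) - 1) := by omega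
    rw [this, ds_double (by omega), ds_two_pow_sub_one]
    omega

include hk in
lemma swap_iso {j1 j2 : Fin (2 ^ k - 2)} (hσ : sig hk j1 = sig hk j2) :
    ∃ g : constructionGraph k ≃g constructionGraph k,
      g (Sum.inl j1) = Sum.inl j2 ∧
      ∀ v : V k, v ≠ Sum.inl j1 → v ≠ Sum.inl j2 → g v = v := by
  set e := Equiv.swap (Sum.inl j1 : V k) (Sum.inl j2) with he
  have he_inr : ∀ i : Fin (k - 1), e (Sum.inr i) = Sum.inr i := fun i =>
    Equiv.swap_apply_of_ne_of_ne (by simp) (by simp)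
  have he_inl : ∀ j : Fin (2 ^ k - 2), ∃ j' : Fin (2 ^ k - 2),
      e (Sum.inl j) = Sum.inl j' ∧ sig hk j' = sig hk j := by
    intro j
    by_cases h1 : j = j1
    · exact ⟨j2, by rw [h1, he]; exact Equiv.swap_apply_left _ _, by rw [h1, hσ]⟩
    by_cases h2 : j = j2
    · exact ⟨j1, by rw [h2, he]; exact Equiv.swap_apply_right _ _, by rw [h2, hσ]⟩
    · exact ⟨j, Equiv.swap_apply_of_ne_of_ne (by simpa using h1) (by simpa using h2), rfl⟩
  have key : ∀ a b : V k, (constructionGraph k).Adj a b →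
      (constructionGraph k).Adj (e a) (e b) := by
    have base : ∀ (j : Fin (2 ^ k - 2)) (i : Fin (k - 1)),
        (constructionGraph k).Adj (Sum.inl j) (Sum.inr i) →
        (constructionGraph k).Adj (e (Sum.inl j)) (e (Sum.inr i)) := by
      intro j i h
      rw [adj_inl_inr' hk] at h
      obtain ⟨j', hj', hσ'⟩ := he_inl j
      rw [hj', he_inr]
      rw [adj_inl_inr' hk, hσ', h]
    rintro (j | i) (j' | i') h
    · exact absurd h (not_adj_inl_inl)
    · exact base _ _ h
    · exact ((constructionGraph k).adj_symm (base _ _ ((constructionGraph k).adj_symm h)))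
    · exact absurd h (not_adj_inr_inr)
  refine ⟨⟨e, ?_⟩, ?_, ?_⟩
  · intro a b
    constructor
    · intro h
      have := key _ _ h
      simpa [he, Equiv.swap_apply_self] using this
    · exact key a b
  · exact Equiv.swap_apply_left _ _
  · intro v hv1 hv2
    exact Equiv.swap_apply_of_ne_of_ne hv1 hv2

include hk in
lemma det_of (E : Set (V k))
    (h : ∀ j1 j2 : Fin (2 ^ k - 2), sig hk j1 = sig hk j2 → j1 ≠ j2 →
      Sum.inl j1 ∈ E ∨ Sum.inl j2 ∈ E) :
    isDeterminingSet (constructionGraph k) E := by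
  intro g hg
  have hcent : ∀ i : Fin (k - 1), g (Sum.inr i) = Sum.inr i := by
    intro i
    obtain ⟨j1, j2, hne, h1, h2⟩ := exists_pair hk i
    have hjE : ∃ j : Fin (2 ^ k - 2), sig hk j = i ∧ (Sum.inl j : V k) ∈ E := by
      rcases h j1 j2 (h1.trans h2.symm) hne with hE | hE
      exacts [⟨j1, h1, hE⟩, ⟨j2, h2, hE⟩]
    obtain ⟨j, hji, hjE⟩ := hjE
    have hfix : g (Sum.inl j) = Sum.inl j := hg _ hjE
    have hadj : (constructionGraph k).Adj (Sum.inl j) (Sum.inr i) :=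
      (adj_inl_inr' hk).mpr hji.symm
    have hadj2 : (constructionGraph k).Adj (Sum.inl j) (g (Sum.inr i)) := by
      have := g.map_adj_iff.mpr hadj
      rwa [hfix] at this
    rcases hgi : g (Sum.inr i) with j' | i'
    · rw [hgi] at hadj2; exact absurd hadj2 not_adj_inl_inl
    · rw [hgi] at hadj2
      rw [adj_inl_inr' hk] at hadj2
      rw [hadj2, hji]
  have hleaf : ∀ j : Fin (2 ^ k - 2), g (Sum.inl j) = Sum.inl j := by
    intro j
    by_cases hjE : (Sum.inl j : V k) ∈ E
    · exact hg _ hjE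
    have hadj : (constructionGraph k).Adj (Sum.inl j) (Sum.inr (sig hk j)) :=
      (adj_inl_inr' hk).mpr rfl
    have hadj2 : (constructionGraph k).Adj (g (Sum.inl j)) (Sum.inr (sig hk j)) := by
      have := g.map_adj_iff.mpr hadj
      rwa [hcent _] at this
    rcases hgj : g (Sum.inl j) with j'' | i''
    · rw [hgj] at hadj2
      have hσ : sig hk j = sig hk j'' := (adj_inl_inr' hk).mp hadj2
      by_cases hjj : j'' = j
      · rw [hjj]
      · rcases h j j'' hσ (Ne.symm hjj) with hE | hE
        · exact absurd hE hjE
        · have hfix'' : g (Sum.inl j'') = Sum.inl j'' := hg _ hE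
          have : (Sum.inl j : V k) = Sum.inl j'' :=
            g.toEquiv.injective (by simpa using hgj.trans hfix''.symm)
          simp only [Sum.inl.injEq] at this
          exact absurd this.symm hjj
    · rw [hgj] at hadj2; exact absurd hadj2 not_adj_inr_inr
  intro v
  rcases v with j | i
  exacts [hleaf j, hcent i]

end Graph
lemma ds_one : ds 1 = 1 := by
  rw [ds, Nat.digits_def' (b := 2) (by norm_num) (by norm_num)]
  norm_num

lemma ds_two : ds 2 = 1 := by
  have : (2 : ℕ) = 2 * 1 := by norm_num
  rw [this, ds_double (by norm_num), ds_one]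

end Stmt19Aux

open Stmt19Aux in
theorem stmt19 (N : ℕ) (hN : 0 < N) (k : ℕ) (hk3 : 3 ≤ k) (hkN : N + 3 ≤ 2 * k) :
    IsLeast {m : ℕ | ∃ E : Finset (Fin (2 ^ k - 2) ⊕ Fin (k - 1)),
        isDeterminingSet (constructionGraph k) ↑E ∧ E.card = m} (2 ^ k - (k + 1)) ∧
    IsLeast {m : ℕ | ∀ E : Finset (Fin (2 ^ k - 2) ⊕ Fin (k - 1)),
        E.card = m → isDeterminingSet (constructionGraph k) ↑E} (2 ^ k + k - 4) ∧
    (2 ^ k + k - 4) - (2 ^ k - (k + 1)) = 2 * k - 3 ∧ N ≤ 2 * k - 3 := by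
  have h8 : 8 ≤ 2 ^ k := pow8 hk3
  have hkp : k < 2 ^ k := Nat.lt_two_pow_self
  have hcV : Fintype.card (V k) = (2 ^ k - 2) + (k - 1) := by
    simp [Stmt19Aux.V, Fintype.card_sum]
  refine ⟨⟨?_, ?_⟩, ⟨?_, ?_⟩, by omega, by omega⟩
  · -- Det membership: explicit minimum determining set
    obtain ⟨r, hr⟩ : ∃ r : Fin (k - 1) → Fin (2 ^ k - 2), ∀ i, sig hk3 (r i) = i := by
      refine ⟨fun i => (exists_pair hk3 i).choose, fun i => ?_⟩
      exact (exists_pair hk3 i).choose_spec.choose_spec.2.1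
    have hrinj : Function.Injective r := fun a b hab => by rw [← hr a, ← hr b, hab]
    refine ⟨(Finset.univ \ Finset.univ.image r).image Sum.inl, ?_, ?_⟩
    · apply det_of hk3
      intro j1 j2 hσ hne
      by_contra hno
      push_neg at hno
      obtain ⟨h1, h2⟩ := hno
      have key : ∀ j : Fin (2 ^ k - 2),
          (Sum.inl j : V k) ∉
            (((Finset.univ \ Finset.univ.image r).image Sum.inl : Finset (V k)) : Set (V k)) →
          ∃ i, r i = j := by
        intro j hj
        by_contra hri
        push_neg at hri
        apply hj
        rw [Finset.mem_coe, Finset.mem_image]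
        refine ⟨j, Finset.mem_sdiff.mpr ⟨Finset.mem_univ _, ?_⟩, rfl⟩
        rw [Finset.mem_image]
        push_neg
        exact fun i _ => hri i
      obtain ⟨i1, hi1⟩ := key _ h1
      obtain ⟨i2, hi2⟩ := key _ h2
      apply hne
      have e1 : i1 = sig hk3 j1 := by rw [← hi1, hr]
      have e2 : i2 = sig hk3 j2 := by rw [← hi2, hr]
      rw [← hi1, ← hi2, e1, e2, hσ]
    · rw [Finset.card_image_of_injective _ Sum.inl_injective,
        Finset.card_sdiff_of_subset (Finset.subset_univ _),
        Finset.card_image_of_injective _ hrinj]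
      simp only [Finset.card_univ, Fintype.card_fin]
      omega
  · -- Det lower bound
    rintro m ⟨E, hdet, hcard⟩
    set M := Finset.univ.filter (fun j : Fin (2 ^ k - 2) => (Sum.inl j : V k) ∉ E) with hM
    have hMinj : Set.InjOn (sig hk3) M := by
      intro j1 hj1 j2 hj2 hσ
      by_contra hne
      obtain ⟨g, hg1, hg2⟩ := swap_iso hk3 hσ
      simp only [hM, Finset.coe_filter, Set.mem_setOf_eq, Finset.mem_univ, true_and] at hj1 hj2
      have hfixE : ∀ v ∈ (E : Set (V k)), g v = v := by
        intro v hv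
        refine hg2 v ?_ ?_
        · intro hveq; rw [hveq] at hv; exact hj1 hv
        · intro hveq; rw [hveq] at hv; exact hj2 hv
      have := hdet g hfixE (Sum.inl j1)
      rw [hg1] at this
      simp only [Sum.inl.injEq] at this
      exact hne this.symm
    have hMcard : M.card ≤ k - 1 := by
      have := Finset.card_le_card_of_injOn (sig hk3)
        (fun a _ => Finset.mem_univ (sig hk3 a)) hMinj
      simpa [Finset.card_univ] using this
    have hsub : (Finset.univ.filter
        (fun j : Fin (2 ^ k - 2) => (Sum.inl j : V k) ∈ E)).image Sum.inl ⊆ E := by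
      intro v hv
      simp only [Finset.mem_image, Finset.mem_filter, Finset.mem_univ, true_and] at hv
      obtain ⟨j, hj, rfl⟩ := hv
      exact hj
    have hle := Finset.card_le_card hsub
    rw [Finset.card_image_of_injective _ Sum.inl_injective] at hle
    have hsplit := Finset.card_filter_add_card_filter_not
      (s := (Finset.univ : Finset (Fin (2 ^ k - 2))))
      (p := fun j => (Sum.inl j : V k) ∈ E)
    simp only [Finset.card_univ, Fintype.card_fin] at hsplit
    have hMeq : (Finset.univ.filter
        (fun j : Fin (2 ^ k - 2) => ¬ (Sum.inl j : V k) ∈ E)).card = M.card := rfl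
    omega
  · -- dtr membership
    intro E hcard
    apply det_of hk3
    intro j1 j2 hσ hne
    by_contra hno
    push_neg at hno
    obtain ⟨h1, h2⟩ := hno
    have hpair : ({Sum.inl j1, Sum.inl j2} : Finset (V k)) ⊆ Finset.univ \ E := by
      intro v hv
      simp only [Finset.mem_insert, Finset.mem_singleton] at hv
      rw [Finset.mem_sdiff]
      refine ⟨Finset.mem_univ _, ?_⟩
      rcases hv with rfl | rfl
      · exact fun hv' => h1 (Finset.mem_coe.mpr hv')
      · exact fun hv' => h2 (Finset.mem_coe.mpr hv')
    have hpc : ({Sum.inl j1, Sum.inl j2} : Finset (V k)).card = 2 :=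
      Finset.card_pair (by simpa using hne)
    have hsc : (Finset.univ \ E).card = Fintype.card (V k) - E.card := by
      rw [Finset.card_sdiff_of_subset (Finset.subset_univ _), Finset.card_univ]
    have := Finset.card_le_card hpair
    omega
  · -- dtr lower bound
    intro m hm
    by_contra hlt
    push_neg at hlt
    set j1 : Fin (2 ^ k - 2) := ⟨0, by omega⟩ with hj1
    set j2 : Fin (2 ^ k - 2) := ⟨1, by omega⟩ with hj2
    have hσ : sig hk3 j1 = sig hk3 j2 := by
      rw [Fin.ext_iff]
      simp only [sig, hj1, hj2]
      norm_num [ds_one, ds_two]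
    have hS : m ≤ (Finset.univ \ ({Sum.inl j1, Sum.inl j2} : Finset (V k))).card := by
      rw [Finset.card_sdiff_of_subset (Finset.subset_univ _), Finset.card_univ,
        Finset.card_pair (by simp [hj1, hj2, Fin.ext_iff])]
      omega
    obtain ⟨E, hEsub, hEcard⟩ := Finset.exists_subset_card_eq hS
    have hd := hm E hEcard
    obtain ⟨g, hg1, hg2⟩ := swap_iso hk3 hσ
    have hfixE : ∀ v ∈ (E : Set (V k)), g v = v := by
      intro v hv
      have := hEsub (Finset.mem_coe.mp hv)
      rw [Finset.mem_sdiff] at this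
      simp only [Finset.mem_insert, Finset.mem_singleton, not_or] at this
      exact hg2 v this.2.1 this.2.2
    have := hd g hfixE (Sum.inl j1)
    rw [hg1] at this
    simp only [Sum.inl.injEq, hj1, hj2, Fin.ext_iff] at this
    omega
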